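/- Verification of the LRD divergence condition for separable covariances. Suppose C(z,τ) = C_S(z) · C_T(τ) with C_T(τ) = L(τ)/τ^α for τ > 0, where α ∈ (0,1), L : (0,∞) → (0,∞) is measurable, locally bounded and slowly varying at infinity, and C_S : [0,∞) → [0,∞) is continuous with C_S(0) = 1. Let K ⊂ ℝ^d be a convex body and P₁, P₂ independent uniform random points in K. Then Condition 2(ii) holds for m = 1 whenever α ∈ (0,1), and for m = 2 whenever α ∈ (0,1/2); that is, in each case there exists δ ∈ (0,1) such that T^{−δ} ∫₀^T (1−τ/T) E[C(‖P₁−P₂‖,τ)^m] dτ → ∞ as T → ∞. -/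

import Mathlib

open MeasureTheory ProbabilityTheory Filter Topology

noncomputable section

variable {d : ℕ}

/-- The joint law of two independent random points, each uniformly distributed in `K`. -/
def unifPair (K : Set (EuclideanSpace ℝ (Fin d))) :
    Measure (EuclideanSpace ℝ (Fin d) × EuclideanSpace ℝ (Fin d)) :=
  (volume (K ×ˢ K))⁻¹ • volume.restrict (K ×ˢ K)

/-- **Condition 2(ii)** for an integer `m ≥ 1` and a covariance function `C`: there exists
`δ ∈ (0,1)` such that `T^{−δ} ∫₀^T (1−τ/T) E[C(‖P₁−P₂‖,τ)^m] dτ → ∞` as `T → ∞`, where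
`P₁, P₂` are independent uniform random points in `K`. -/
def Cond2ii (C : ℝ → ℝ → ℝ) (K : Set (EuclideanSpace ℝ (Fin d))) (m : ℕ) : Prop :=
  ∃ δ ∈ Set.Ioo (0:ℝ) 1,
    Tendsto (fun T : ℝ => T ^ (-δ) *
        ∫ τ in (0:ℝ)..T, (1 - τ / T) * ∫ p, C ‖p.1 - p.2‖ τ ^ m ∂(unifPair K))
      atTop atTop
open Real

private lemma key_tendsto
    (α : ℝ) (m : ℕ) (hm : 0 < m) (hα : 0 < α) (hβ1 : (m : ℝ) * α < 1)
    (L : ℝ → ℝ) (hLmeas : Measurable L) (hLpos : ∀ t : ℝ, 0 < t → 0 < L t)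
    (hLlocbdd : ∀ b : ℝ, 0 < b → ∃ M : ℝ, ∀ t ∈ Set.Ioc (0:ℝ) b, L t ≤ M)
    (hLslow : Tendsto (fun t : ℝ => L (2 * t) / L t) atTop (𝓝 1))
    (I : ℝ) (hI : 0 < I) :
    ∃ δ ∈ Set.Ioo (0:ℝ) 1,
      Tendsto (fun T : ℝ => T ^ (-δ) *
          ∫ τ in (0:ℝ)..T, (1 - τ / T) * ((L τ / τ ^ α) ^ m * I)) atTop atTop := by
  set β : ℝ := (m : ℝ) * α with hβdef
  have hβ0 : 0 < β := by positivity
  have h1β : 0 < 1 - β := by linarith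
  set h : ℝ → ℝ := fun τ => L τ ^ m * τ ^ (-β) with hhdef
  have hhpos : ∀ τ : ℝ, 0 < τ → 0 < h τ := fun τ hτ =>
    mul_pos (pow_pos (hLpos τ hτ) m) (rpow_pos_of_pos hτ _)
  have hmeash : Measurable h := (hLmeas.pow_const m).mul (measurable_id.pow_const _)
  -- pointwise identification
  have hid : ∀ τ : ℝ, 0 < τ → (L τ / τ ^ α) ^ m = h τ := by
    intro τ hτ
    rw [div_pow, ← rpow_natCast (τ ^ α) m, ← rpow_mul hτ.le, mul_comm α (m:ℝ), ← hβdef,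
      hhdef, div_eq_mul_inv, ← rpow_neg hτ.le]
  -- integrability of the dominant
  have hrpow_int : ∀ b : ℝ, 0 < b → IntegrableOn (fun τ : ℝ => τ ^ (-β)) (Set.Ioc 0 b) := by
    intro b hb
    have : IntervalIntegrable (fun τ : ℝ => τ ^ (-β)) volume 0 b :=
      intervalIntegral.intervalIntegrable_rpow' (by linarith)
    rwa [intervalIntegrable_iff_integrableOn_Ioc_of_le hb.le] at this
  -- integrability of h
  have hint : ∀ b : ℝ, 0 < b → IntegrableOn h (Set.Ioc 0 b) := by
    intro b hb
    obtain ⟨M, hM⟩ := hLlocbdd b hb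
    set M' := max M 1 with hM'def
    refine ((hrpow_int b hb).const_mul (M' ^ m)).mono'
      hmeash.aestronglyMeasurable.restrict ?_
    rw [ae_restrict_iff' measurableSet_Ioc]
    filter_upwards with τ hτ
    have hτ0 : 0 < τ := hτ.1
    have hL0 : 0 < L τ := hLpos τ hτ0
    have h2 : (0:ℝ) < τ ^ (-β) := rpow_pos_of_pos hτ0 _
    have h1 : L τ ≤ M' := le_trans (hM τ hτ) (le_max_left _ _)
    have h3 : L τ ^ m ≤ M' ^ m := pow_le_pow_left₀ hL0.le h1 m
    rw [Real.norm_eq_abs, abs_of_nonneg (mul_nonneg (pow_nonneg hL0.le m) h2.le)]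
    exact mul_le_mul_of_nonneg_right h3 h2.le
  have hintI : ∀ a b : ℝ, 0 < a → a ≤ b → IntervalIntegrable h volume a b := by
    intro a b ha hab
    rw [intervalIntegrable_iff_integrableOn_Ioc_of_le hab]
    exact (hint b (lt_of_lt_of_le ha hab)).mono_set (Set.Ioc_subset_Ioc_left ha.le)
  -- G and its properties
  set G : ℝ → ℝ := fun S => ∫ τ in Set.Ioc (0:ℝ) S, h τ with hGdef
  have hhnn_ae : ∀ b : ℝ, 0 ≤ᶠ[ae (volume.restrict (Set.Ioc (0:ℝ) b))] h := by
    intro b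
    rw [EventuallyLE, ae_restrict_iff' measurableSet_Ioc]
    filter_upwards with τ hτ
    exact (hhpos τ hτ.1).le
  have hGmono : ∀ S₁ S₂ : ℝ, 0 < S₂ → S₁ ≤ S₂ → G S₁ ≤ G S₂ := by
    intro S₁ S₂ h2 h12
    exact setIntegral_mono_set (hint S₂ h2) (hhnn_ae S₂)
      (HasSubset.Subset.eventuallyLE (Set.Ioc_subset_Ioc_right h12))
  -- constants
  set δ : ℝ := (1 - β) / 4 with hδdef
  have hδ0 : 0 < δ := by positivity
  have hδ1 : δ < 1 := by rw [hδdef]; linarith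
  set ρ : ℝ := (2:ℝ) ^ ((1 - β) / 2) with hρdef
  have hρ1 : 1 < ρ := (one_lt_rpow_iff_of_pos two_pos).2 (Or.inl ⟨one_lt_two, by linarith⟩)
  set c₀ : ℝ := (2:ℝ) ^ (-((1 - β) / (4 * m))) with hc₀def
  have hc₀pos : 0 < c₀ := rpow_pos_of_pos two_pos _
  have hc₀lt1 : c₀ < 1 := by
    rw [hc₀def]
    apply rpow_lt_one_of_one_lt_of_neg one_lt_two
    have : (0:ℝ) < (1 - β) / (4 * m) := by positivity
    linarith
  -- threshold for slow variation
  have hev : ∀ᶠ t in atTop, c₀ ≤ L (2 * t) / L t := hLslow.eventually (eventually_ge_nhds hc₀lt1)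
  obtain ⟨t₀, ht₀⟩ := eventually_atTop.mp hev
  set σ₀ : ℝ := max t₀ 1 with hσ₀def
  have hσ₀pos : (0:ℝ) < σ₀ := lt_of_lt_of_le one_pos (le_max_right _ _)
  have hσ₀c : ∀ t : ℝ, σ₀ ≤ t → c₀ ≤ L (2 * t) / L t := fun t ht =>
    ht₀ t (le_trans (le_max_left _ _) ht)
  -- the doubling increments
  set D : ℝ → ℝ := fun S => ∫ τ in S..(2 * S), h τ with hDdef
  have hDnn : ∀ S : ℝ, 0 < S → 0 ≤ D S := by
    intro S hS
    exact intervalIntegral.integral_nonneg (by linarith)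
      (fun x hx => (hhpos x (lt_of_lt_of_le hS hx.1)).le)
  have hDσ₀pos : 0 < D σ₀ :=
    intervalIntegral.intervalIntegral_pos_of_pos_on
      (hintI σ₀ (2 * σ₀) hσ₀pos (by linarith))
      (fun x hx => hhpos x (lt_trans hσ₀pos hx.1)) (by linarith)
  -- the recursion step
  have hstep : ∀ S : ℝ, σ₀ ≤ S → ρ * D S ≤ D (2 * S) := by
    intro S hS
    have hSpos : 0 < S := lt_of_lt_of_le hσ₀pos hS
    have hcomp : ∫ σ in S..(2 * S), h (2 * σ) =
        (2:ℝ)⁻¹ • ∫ τ in (2 * S)..(2 * (2 * S)), h τ :=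
      intervalIntegral.integral_comp_mul_left h two_ne_zero
    have hint2 : IntervalIntegrable (fun σ => h (2 * σ)) volume S (2 * S) := by
      have := (hintI (2 * S) (2 * (2 * S)) (by linarith) (by linarith)).comp_mul_left (c := 2)
      have e1 : (2 * S) / 2 = S := by ring
      have e2 : (2 * (2 * S)) / 2 = 2 * S := by ring
      rwa [e1, e2] at this
    have hmono : c₀ ^ m * (2:ℝ) ^ (-β) * D S ≤ ∫ σ in S..(2 * S), h (2 * σ) := by
      have hDS : ∫ σ in S..(2 * S), c₀ ^ m * (2:ℝ) ^ (-β) * h σ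
          = c₀ ^ m * (2:ℝ) ^ (-β) * D S := intervalIntegral.integral_const_mul _ _
      rw [← hDS]
      apply intervalIntegral.integral_mono_on (by linarith)
        ((hintI S (2 * S) hSpos (by linarith)).const_mul _) hint2
      intro σ hσ
      have hσ0 : 0 < σ := lt_of_lt_of_le hSpos hσ.1
      have hσσ₀ : σ₀ ≤ σ := le_trans hS hσ.1
      have hLσ : 0 < L σ := hLpos σ hσ0
      have hLr : c₀ * L σ ≤ L (2 * σ) := (le_div_iff₀ hLσ).mp (hσ₀c σ hσσ₀)
      have hpow : (c₀ * L σ) ^ m ≤ L (2 * σ) ^ m :=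
        pow_le_pow_left₀ (by positivity) hLr m
      calc c₀ ^ m * (2:ℝ) ^ (-β) * h σ
          = (c₀ * L σ) ^ m * ((2:ℝ) ^ (-β) * σ ^ (-β)) := by
            simp only [hhdef, mul_pow]; ring
        _ ≤ L (2 * σ) ^ m * ((2:ℝ) ^ (-β) * σ ^ (-β)) :=
            mul_le_mul_of_nonneg_right hpow (by positivity)
        _ = h (2 * σ) := by
            simp only [hhdef, mul_rpow (by norm_num : (0:ℝ) ≤ 2) hσ0.le]
    have hρle : ρ ≤ 2 * (c₀ ^ m * (2:ℝ) ^ (-β)) := by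
      have hcm : c₀ ^ m = (2:ℝ) ^ (-((1 - β) / 4)) := by
        rw [hc₀def, ← rpow_natCast ((2:ℝ) ^ (-((1 - β) / (4 * m)))) m,
          ← rpow_mul (by norm_num : (0:ℝ) ≤ 2)]
        congr 1
        have hm' : (m:ℝ) ≠ 0 := Nat.cast_ne_zero.mpr hm.ne'
        field_simp
      have he : 2 * ((2:ℝ) ^ (-((1 - β) / 4)) * (2:ℝ) ^ (-β))
          = (2:ℝ) ^ (1 + (-((1 - β) / 4)) + (-β)) := by
        rw [rpow_add two_pos, rpow_add two_pos, rpow_one]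
        ring
      rw [hcm, he, hρdef]
      exact rpow_le_rpow_of_exponent_le one_le_two (by linarith)
    have hDval : D (2 * S) = 2 * ∫ σ in S..(2 * S), h (2 * σ) := by
      simp only [hDdef]
      rw [hcomp, smul_eq_mul]
      ring
    calc ρ * D S ≤ 2 * (c₀ ^ m * (2:ℝ) ^ (-β)) * D S :=
          mul_le_mul_of_nonneg_right hρle (hDnn S hSpos)
      _ = 2 * (c₀ ^ m * (2:ℝ) ^ (-β) * D S) := by ring
      _ ≤ 2 * ∫ σ in S..(2 * S), h (2 * σ) := by linarith [hmono]
      _ = D (2 * S) := hDval.symm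
  -- iterate
  have hDn : ∀ n : ℕ, ρ ^ n * D σ₀ ≤ D (2 ^ n * σ₀) := by
    intro n
    induction n with
    | zero => simp
    | succ n ih =>
      have h2n : (1:ℝ) ≤ 2 ^ n := one_le_pow₀ one_le_two
      have h2nσ : σ₀ ≤ 2 ^ n * σ₀ := le_mul_of_one_le_left hσ₀pos.le h2n
      calc ρ ^ (n + 1) * D σ₀ = ρ * (ρ ^ n * D σ₀) := by ring
        _ ≤ ρ * D (2 ^ n * σ₀) := mul_le_mul_of_nonneg_left ih (by linarith)
        _ ≤ D (2 * (2 ^ n * σ₀)) := hstep _ h2nσ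
        _ = D (2 ^ (n + 1) * σ₀) := by congr 1; rw [pow_succ]; ring
  -- G dominates D
  have hGD : ∀ S : ℝ, 0 < S → D S ≤ G (2 * S) := by
    intro S hS
    have hDeq : D S = ∫ τ in Set.Ioc S (2 * S), h τ :=
      intervalIntegral.integral_of_le (by linarith)
    rw [hDeq]
    exact setIntegral_mono_set (hint (2 * S) (by linarith)) (hhnn_ae (2 * S))
      (HasSubset.Subset.eventuallyLE (Set.Ioc_subset_Ioc_left hS.le))
  -- integrability of the weighted integrand
  have hgint : ∀ T : ℝ, 0 < T →
      IntegrableOn (fun τ : ℝ => (1 - τ / T) * (L τ / τ ^ α) ^ m) (Set.Ioc 0 T) := by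
    intro T hT
    obtain ⟨M, hM⟩ := hLlocbdd T hT
    set M' := max M 1 with hM'def
    have hmeasg : Measurable (fun τ : ℝ => (1 - τ / T) * (L τ / τ ^ α) ^ m) :=
      ((measurable_const.sub (measurable_id.div_const T)).mul
        ((hLmeas.div (measurable_id.pow_const α)).pow_const m))
    refine ((hrpow_int T hT).const_mul (M' ^ m)).mono'
      hmeasg.aestronglyMeasurable.restrict ?_
    rw [ae_restrict_iff' measurableSet_Ioc]
    filter_upwards with τ hτ
    have hτ0 : 0 < τ := hτ.1
    have hL0 : 0 < L τ := hLpos τ hτ0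
    have hwnn : 0 ≤ 1 - τ / T := by
      have : τ / T ≤ 1 := (div_le_one hT).mpr hτ.2
      linarith
    have hwle : 1 - τ / T ≤ 1 := by
      have : 0 ≤ τ / T := by positivity
      linarith
    have h2 : (0:ℝ) < τ ^ (-β) := rpow_pos_of_pos hτ0 _
    have h1 : L τ ≤ M' := le_trans (hM τ hτ) (le_max_left _ _)
    have h3 : L τ ^ m ≤ M' ^ m := pow_le_pow_left₀ hL0.le h1 m
    rw [hid τ hτ0, Real.norm_eq_abs,
      abs_of_nonneg (mul_nonneg hwnn (mul_nonneg (pow_nonneg hL0.le m) h2.le))]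
    calc (1 - τ / T) * (L τ ^ m * τ ^ (-β)) ≤ 1 * (L τ ^ m * τ ^ (-β)) :=
          mul_le_mul_of_nonneg_right hwle (mul_nonneg (pow_nonneg hL0.le m) h2.le)
      _ = L τ ^ m * τ ^ (-β) := one_mul _
      _ ≤ M' ^ m * τ ^ (-β) := mul_le_mul_of_nonneg_right h3 h2.le
  -- the lower bound of the weighted integral by G(T/2)/2
  have hA : ∀ T : ℝ, 0 < T →
      (1 / 2) * G (T / 2) ≤ ∫ τ in (0:ℝ)..T, (1 - τ / T) * (L τ / τ ^ α) ^ m := by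
    intro T hT
    have hT2 : 0 < T / 2 := by linarith
    have step1 : ∫ τ in Set.Ioc (0:ℝ) (T / 2), (1 / 2) * h τ
        ≤ ∫ τ in Set.Ioc (0:ℝ) (T / 2), (1 - τ / T) * (L τ / τ ^ α) ^ m := by
      apply setIntegral_mono_on ((hint (T / 2) hT2).const_mul _)
        ((hgint T hT).mono_set (Set.Ioc_subset_Ioc_right (by linarith)))
        measurableSet_Ioc
      intro τ hτ
      have hτ0 : 0 < τ := hτ.1
      rw [hid τ hτ0]
      have hw : (1:ℝ) / 2 ≤ 1 - τ / T := by
        have : τ / T ≤ 1 / 2 := by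
          rw [div_le_div_iff₀ hT (by norm_num)]
          linarith [hτ.2]
        linarith
      exact mul_le_mul_of_nonneg_right hw (hhpos τ hτ0).le
    have step2 : ∫ τ in Set.Ioc (0:ℝ) (T / 2), (1 - τ / T) * (L τ / τ ^ α) ^ m
        ≤ ∫ τ in Set.Ioc (0:ℝ) T, (1 - τ / T) * (L τ / τ ^ α) ^ m := by
      apply setIntegral_mono_set (hgint T hT) ?_
        (HasSubset.Subset.eventuallyLE (Set.Ioc_subset_Ioc_right (by linarith)))
      rw [EventuallyLE, ae_restrict_iff' measurableSet_Ioc]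
      filter_upwards with τ hτ
      have hτ0 : 0 < τ := hτ.1
      have hwnn : 0 ≤ 1 - τ / T := by
        have : τ / T ≤ 1 := (div_le_one hT).mpr hτ.2
        linarith
      have hhτ : (0:ℝ) < (L τ / τ ^ α) ^ m := by
        rw [hid τ hτ0]; exact hhpos τ hτ0
      positivity
    have step0 : ∫ τ in Set.Ioc (0:ℝ) (T / 2), (1 / 2) * h τ = (1 / 2) * G (T / 2) := by
      simp only [hGdef]
      exact integral_const_mul _ _
    rw [intervalIntegral.integral_of_le hT.le]
    rw [step0] at step1
    exact le_trans step1 step2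
  -- conclusion
  refine ⟨δ, ⟨hδ0, hδ1⟩, ?_⟩
  set q : ℝ := (2:ℝ) ^ δ with hqdef
  have hq1 : 1 < q := (one_lt_rpow_iff_of_pos two_pos).2 (Or.inl ⟨one_lt_two, hδ0⟩)
  set c₁ : ℝ := (2:ℝ) ^ (-(3 * δ)) * σ₀ ^ (-δ) * (I * (D σ₀ / 2)) with hc₁def
  have hc₁pos : 0 < c₁ := by
    have h1 : (0:ℝ) < (2:ℝ) ^ (-(3 * δ)) := rpow_pos_of_pos two_pos _
    have h2 : (0:ℝ) < σ₀ ^ (-δ) := rpow_pos_of_pos hσ₀pos _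
    have h3 : 0 < I * (D σ₀ / 2) := mul_pos hI (by linarith)
    positivity
  have hnftend : Tendsto (fun T : ℝ => ⌊Real.logb 2 (T / (4 * σ₀))⌋₊) atTop atTop := by
    apply tendsto_nat_floor_atTop.comp
    apply (Real.tendsto_logb_atTop one_lt_two).comp
    exact tendsto_id.atTop_div_const (by positivity)
  have hphitend : Tendsto (fun T : ℝ => c₁ * q ^ ⌊Real.logb 2 (T / (4 * σ₀))⌋₊) atTop atTop :=
    Tendsto.const_mul_atTop hc₁pos
      ((tendsto_pow_atTop_atTop_of_one_lt hq1).comp hnftend)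
  apply tendsto_atTop_mono' atTop ?_ hphitend
  filter_upwards [eventually_ge_atTop (4 * σ₀)] with T hT
  have hTpos : 0 < T := lt_of_lt_of_le (by positivity) hT
  set n : ℕ := ⌊Real.logb 2 (T / (4 * σ₀))⌋₊ with hndef
  have hxpos : 0 < T / (4 * σ₀) := by positivity
  have hx1 : (1:ℝ) ≤ T / (4 * σ₀) := (one_le_div (by positivity)).mpr hT
  have hlognn : 0 ≤ Real.logb 2 (T / (4 * σ₀)) := Real.logb_nonneg one_lt_two hx1
  have hlow : (2:ℝ) ^ n * (4 * σ₀) ≤ T := by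
    have h1 : (2:ℝ) ^ (n:ℝ) ≤ T / (4 * σ₀) := by
      calc (2:ℝ) ^ (n:ℝ) ≤ (2:ℝ) ^ (Real.logb 2 (T / (4 * σ₀))) :=
            rpow_le_rpow_of_exponent_le one_le_two (Nat.floor_le hlognn)
        _ = T / (4 * σ₀) := Real.rpow_logb two_pos (by norm_num) hxpos
    rw [rpow_natCast] at h1
    exact (le_div_iff₀ (by positivity)).mp h1
  have hhigh : T < (2:ℝ) ^ (n + 1) * (4 * σ₀) := by
    have h1 : T / (4 * σ₀) < (2:ℝ) ^ ((n:ℝ) + 1) := by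
      calc T / (4 * σ₀) = (2:ℝ) ^ (Real.logb 2 (T / (4 * σ₀))) :=
            (Real.rpow_logb two_pos (by norm_num) hxpos).symm
        _ < (2:ℝ) ^ ((n:ℝ) + 1) :=
            rpow_lt_rpow_of_exponent_lt one_lt_two (Nat.lt_floor_add_one _)
    have h2 : ((n:ℝ) + 1) = ((n + 1 : ℕ) : ℝ) := by push_cast; ring
    rw [h2, rpow_natCast] at h1
    exact (div_lt_iff₀ (by positivity)).mp h1
  -- chain of bounds
  have hX : (0:ℝ) < (2:ℝ) ^ n * σ₀ := by positivity
  have hGTb : ρ ^ n * D σ₀ ≤ G (T / 2) := by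
    have h1 : 2 * ((2:ℝ) ^ n * σ₀) ≤ T / 2 := by
      have he : (2:ℝ) ^ n * (4 * σ₀) = 4 * ((2:ℝ) ^ n * σ₀) := by ring
      rw [he] at hlow
      linarith
    calc ρ ^ n * D σ₀ ≤ D ((2:ℝ) ^ n * σ₀) := hDn n
      _ ≤ G (2 * ((2:ℝ) ^ n * σ₀)) := hGD _ hX
      _ ≤ G (T / 2) := hGmono _ _ (by linarith) h1
  have hTd : ((2:ℝ) ^ (n + 3) * σ₀) ^ (-δ) ≤ T ^ (-δ) := by
    apply rpow_le_rpow_of_nonpos hTpos ?_ (by linarith)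
    have he : (2:ℝ) ^ (n + 1) * (4 * σ₀) = (2:ℝ) ^ (n + 3) * σ₀ := by
      rw [pow_succ, pow_succ]
      ring
    rw [← he]
    exact hhigh.le
  -- rewrite integrand and combine
  have hJ : ∫ τ in (0:ℝ)..T, (1 - τ / T) * ((L τ / τ ^ α) ^ m * I)
      = I * ∫ τ in (0:ℝ)..T, (1 - τ / T) * (L τ / τ ^ α) ^ m := by
    rw [← intervalIntegral.integral_const_mul]
    apply intervalIntegral.integral_congr
    intro τ _
    ring
  have hApos := hA T hTpos
  have hInner : I * ((1 / 2) * (ρ ^ n * D σ₀))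
      ≤ I * ∫ τ in (0:ℝ)..T, (1 - τ / T) * (L τ / τ ^ α) ^ m := by
    apply mul_le_mul_of_nonneg_left ?_ hI.le
    calc (1 / 2) * (ρ ^ n * D σ₀) ≤ (1 / 2) * G (T / 2) := by
          apply mul_le_mul_of_nonneg_left hGTb (by norm_num)
      _ ≤ _ := hApos
  have hfinal : ((2:ℝ) ^ (n + 3) * σ₀) ^ (-δ) * (I * ((1 / 2) * (ρ ^ n * D σ₀)))
      ≤ T ^ (-δ) * (I * ∫ τ in (0:ℝ)..T, (1 - τ / T) * (L τ / τ ^ α) ^ m) := by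
    apply mul_le_mul hTd hInner ?_ (rpow_pos_of_pos hTpos _).le
    have h1 : (0:ℝ) < ρ ^ n * D σ₀ := mul_pos (pow_pos (by linarith) n) hDσ₀pos
    positivity
  -- identify the left side with c₁ * q ^ n
  have hexp : ((2:ℝ) ^ (n + 3) * σ₀) ^ (-δ) * (I * ((1 / 2) * (ρ ^ n * D σ₀)))
      = c₁ * q ^ n := by
    have e1 : ((2:ℝ) ^ (n + 3) : ℝ) = (2:ℝ) ^ (((n:ℝ) + 3)) := by
      rw [← rpow_natCast (2:ℝ) (n + 3)]
      push_cast
      ring_nf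
    have e2 : ρ ^ n = (2:ℝ) ^ ((n:ℝ) * ((1 - β) / 2)) := by
      rw [hρdef, ← rpow_natCast ((2:ℝ) ^ ((1 - β) / 2)) n, ← rpow_mul (by norm_num)]
      rw [mul_comm]
    have e3 : q ^ n = (2:ℝ) ^ ((n:ℝ) * δ) := by
      rw [hqdef, ← rpow_natCast ((2:ℝ) ^ δ) n, ← rpow_mul (by norm_num)]
      rw [mul_comm]
    have e4 : (((2:ℝ) ^ (((n:ℝ) + 3))) * σ₀) ^ (-δ)
        = (2:ℝ) ^ (((n:ℝ) + 3) * (-δ)) * σ₀ ^ (-δ) := by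
      rw [mul_rpow (by positivity) hσ₀pos.le, ← rpow_mul (by norm_num)]
    have key2 : ((n:ℝ) + 3) * (-δ) + (n:ℝ) * ((1 - β) / 2) = (-(3 * δ)) + (n:ℝ) * δ := by
      rw [hδdef]; ring
    rw [e1, e2, e3, e4, hc₁def]
    rw [show (2:ℝ) ^ (((n:ℝ) + 3) * (-δ)) * σ₀ ^ (-δ) *
        (I * (1 / 2 * ((2:ℝ) ^ ((n:ℝ) * ((1 - β) / 2)) * D σ₀)))
        = ((2:ℝ) ^ (((n:ℝ) + 3) * (-δ)) * (2:ℝ) ^ ((n:ℝ) * ((1 - β) / 2))) *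
          (σ₀ ^ (-δ) * (I * (D σ₀ / 2))) from by ring]
    rw [← rpow_add two_pos, key2, rpow_add two_pos]
    ring
  rw [hJ, ← hexp]
  exact hfinal

private lemma spatial_pos
    (K : Set (EuclideanSpace ℝ (Fin d)))
    (hKcomp : IsCompact K) (hKint : (interior K).Nonempty)
    (CS : ℝ → ℝ) (hCScont : Continuous CS) (hCSnn : ∀ z, 0 ≤ z → 0 ≤ CS z)
    (hCS0 : CS 0 = 1) (m : ℕ) :
    0 < ∫ p, CS ‖p.1 - p.2‖ ^ m ∂(unifPair K) := by
  obtain ⟨x, hx⟩ := hKint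
  obtain ⟨r, hr, hball⟩ := Metric.isOpen_iff.mp isOpen_interior x hx
  -- continuity at 0 gives ε with CS > 1/2 on [0, ε)
  have hcontAt : ContinuousAt CS 0 := hCScont.continuousAt
  obtain ⟨ε, hε, hCSε⟩ := Metric.continuousAt_iff.mp hcontAt (1/2) (by norm_num)
  set r' : ℝ := min r (ε / 4) with hr'def
  have hr'pos : 0 < r' := lt_min hr (by linarith)
  set U : Set (EuclideanSpace ℝ (Fin d) × EuclideanSpace ℝ (Fin d)) :=
    Metric.ball x r' ×ˢ Metric.ball x r' with hUdef
  have hUopen : IsOpen U := (Metric.isOpen_ball).prod Metric.isOpen_ball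
  have hUne : U.Nonempty := ⟨(x, x), ⟨Metric.mem_ball_self hr'pos, Metric.mem_ball_self hr'pos⟩⟩
  have hUsub : U ⊆ K ×ˢ K := by
    intro p hp
    have h1 : p.1 ∈ K := interior_subset (hball (Metric.ball_subset_ball (min_le_left _ _) hp.1))
    have h2 : p.2 ∈ K := interior_subset (hball (Metric.ball_subset_ball (min_le_left _ _) hp.2))
    exact ⟨h1, h2⟩
  -- CS value bound on U
  have hCSU : ∀ p ∈ U, ((1:ℝ)/2) ^ m ≤ CS ‖p.1 - p.2‖ ^ m := by
    intro p hp
    have hd1 : dist p.1 x < r' := hp.1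
    have hd2 : dist p.2 x < r' := hp.2
    have hnorm : ‖p.1 - p.2‖ < ε := by
      have : dist p.1 p.2 < 2 * r' := by
        calc dist p.1 p.2 ≤ dist p.1 x + dist x p.2 := dist_triangle _ _ _
          _ < r' + r' := by rw [dist_comm x p.2]; linarith
          _ = 2 * r' := by ring
      have hr'ε : 2 * r' ≤ ε / 2 := by
        have := min_le_right r (ε / 4)
        have : r' ≤ ε / 4 := this
        linarith
      rw [← dist_eq_norm]
      linarith
    have : |CS ‖p.1 - p.2‖ - 1| < 1/2 := by
      have := hCSε (x := ‖p.1 - p.2‖) (by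
        rw [Real.dist_eq, sub_zero, abs_of_nonneg (norm_nonneg _)]
        exact hnorm)
      rwa [hCS0, Real.dist_eq] at this
    have hgt : (1:ℝ)/2 ≤ CS ‖p.1 - p.2‖ := by
      have := abs_lt.mp this
      linarith [this.1]
    exact pow_le_pow_left₀ (by norm_num) hgt m
  -- measure facts
  have hKKfin : volume (K ×ˢ K) ≠ ⊤ := (hKcomp.prod hKcomp).measure_lt_top.ne
  have hUpos : 0 < volume U := hUopen.measure_pos volume hUne
  have hUKK : volume U ≤ volume (K ×ˢ K) := measure_mono hUsub
  have hKKpos : 0 < volume (K ×ˢ K) := lt_of_lt_of_le hUpos hUKK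
  have hUfin : volume U ≠ ⊤ := ne_top_of_le_ne_top hKKfin hUKK
  -- integrability
  have hfcont : Continuous fun p : EuclideanSpace ℝ (Fin d) × EuclideanSpace ℝ (Fin d) =>
      CS ‖p.1 - p.2‖ ^ m :=
    ((hCScont.comp (continuous_fst.sub continuous_snd).norm).pow m)
  have hfint : IntegrableOn (fun p : EuclideanSpace ℝ (Fin d) × EuclideanSpace ℝ (Fin d) =>
      CS ‖p.1 - p.2‖ ^ m) (K ×ˢ K) volume :=
    hfcont.continuousOn.integrableOn_compact (hKcomp.prod hKcomp)
  have hfnn : ∀ p : EuclideanSpace ℝ (Fin d) × EuclideanSpace ℝ (Fin d),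
      0 ≤ CS ‖p.1 - p.2‖ ^ m := fun p => pow_nonneg (hCSnn _ (norm_nonneg _)) m
  -- positivity of the set integral
  have hIU : ((1:ℝ)/2) ^ m * (volume U).toReal
      ≤ ∫ p in U, CS ‖p.1 - p.2‖ ^ m ∂volume :=
    setIntegral_ge_of_const_le_real hUopen.measurableSet hUfin hCSU (hfint.mono_set hUsub)
  have hIUKK : ∫ p in U, CS ‖p.1 - p.2‖ ^ m ∂volume
      ≤ ∫ p in K ×ˢ K, CS ‖p.1 - p.2‖ ^ m ∂volume := by
    apply setIntegral_mono_set hfint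
    · filter_upwards with p
      exact hfnn p
    · exact HasSubset.Subset.eventuallyLE hUsub
  have hIKKpos : 0 < ∫ p in K ×ˢ K, CS ‖p.1 - p.2‖ ^ m ∂volume := by
    have h1 : (0:ℝ) < ((1:ℝ)/2) ^ m * (volume U).toReal := by
      have := ENNReal.toReal_pos hUpos.ne' hUfin
      positivity
    linarith
  -- assemble
  rw [unifPair, integral_smul_measure, smul_eq_mul]
  have hscal : 0 < ((volume (K ×ˢ K))⁻¹).toReal := by
    apply ENNReal.toReal_pos
    · exact ENNReal.inv_ne_zero.mpr hKKfin
    · exact ENNReal.inv_ne_top.mpr hKKpos.ne'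
  exact mul_pos hscal hIKKpos

/-- **LRD divergence condition for separable covariances**. If
`C(z,τ) = C_S(z) L(τ)/τ^α` with `α ∈ (0,1)`, `L` positive, measurable, locally bounded
and slowly varying at infinity, and `C_S` continuous, nonnegative with `C_S(0) = 1`, then
for any convex body `K`, Condition 2(ii) holds for `m = 1`, and also for `m = 2` whenever
`α < 1/2`. -/
theorem cond2ii_separable
    (K : Set (EuclideanSpace ℝ (Fin d)))
    (hKcomp : IsCompact K) (hKconv : Convex ℝ K) (hKint : (interior K).Nonempty)
    (α : ℝ) (hα : α ∈ Set.Ioo (0:ℝ) 1)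
    (L : ℝ → ℝ) (hLmeas : Measurable L) (hLpos : ∀ t : ℝ, 0 < t → 0 < L t)
    (hLlocbdd : ∀ b : ℝ, 0 < b → ∃ M : ℝ, ∀ t ∈ Set.Ioc (0:ℝ) b, L t ≤ M)
    (hLslow : ∀ lam : ℝ, 0 < lam →
      Tendsto (fun t : ℝ => L (lam * t) / L t) atTop (𝓝 1))
    (CS : ℝ → ℝ) (hCScont : Continuous CS) (hCSnn : ∀ z, 0 ≤ z → 0 ≤ CS z)
    (hCS0 : CS 0 = 1)
    (C : ℝ → ℝ → ℝ) (hC : ∀ z τ, C z τ = CS z * (L τ / τ ^ α)) :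
    Cond2ii C K 1 ∧ (α < 1 / 2 → Cond2ii C K 2) := by
  have main : ∀ m : ℕ, 0 < m → (m : ℝ) * α < 1 → Cond2ii C K m := by
    intro m hm hmα
    have hI := spatial_pos K hKcomp hKint CS hCScont hCSnn hCS0 m
    obtain ⟨δ, hδ, htend⟩ := key_tendsto α m hm hα.1 hmα L hLmeas hLpos hLlocbdd
      (hLslow 2 two_pos) _ hI
    refine ⟨δ, hδ, ?_⟩
    have hrw : ∀ τ : ℝ, (∫ p, C ‖p.1 - p.2‖ τ ^ m ∂(unifPair K))
        = (L τ / τ ^ α) ^ m * ∫ p, CS ‖p.1 - p.2‖ ^ m ∂(unifPair K) := by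
      intro τ
      simp_rw [hC, mul_pow]
      rw [integral_mul_const, mul_comm]
    simp only [hrw]
    exact htend
  constructor
  · apply main 1 one_pos
    push_cast
    linarith [hα.2]
  · intro h2
    apply main 2 two_pos
    push_cast
    linarith
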